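/- If α ∈ ℂ* satisfies |α| < 1 and |arg α| < π/4, and θ ∈ [−π/13, π/13], and M > 0, then for |α| sufficiently small (depending only on M), Re(1/(4α)) < Re(1/α) − M − tan(θ)·Im(1/α) < Re(5/(4α)). -/

import Mathlib

lemma tan_pi_div_13_le : Real.tan (Real.pi / 13) ≤ 1/4 := by
  have hπ : Real.pi < 3.1416 := by
    have := Real.pi_lt_d6; linarith
  have hx0 : 0 < Real.pi / 13 := by positivity
  have hsin : Real.sin (Real.pi / 13) < Real.pi / 13 := Real.sin_lt hx0
  have hcos : 1 - (Real.pi/13)^2/2 ≤ Real.cos (Real.pi / 13) :=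
    Real.one_sub_sq_div_two_le_cos
  have hcospos : (0:ℝ) < Real.cos (Real.pi / 13) := by nlinarith
  rw [Real.tan_eq_sin_div_cos, div_le_iff₀ hcospos]
  nlinarith [Real.pi_gt_three]

lemma abs_tan_le {θ : ℝ} (hθ : θ ∈ Set.Icc (-(Real.pi / 13)) (Real.pi / 13)) :
    |Real.tan θ| ≤ 1/4 := by
  obtain ⟨h1, h2⟩ := hθ
  have hπ : Real.pi / 13 < Real.pi / 2 := by have := Real.pi_pos; linarith
  have hmono := Real.strictMonoOn_tan.monotoneOn
  have hmem : ∀ x : ℝ, -(Real.pi/13) ≤ x → x ≤ Real.pi/13 →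
      x ∈ Set.Ioo (-(Real.pi/2)) (Real.pi/2) := by
    intro x ha hb; constructor <;> [linarith; linarith]
  have hub : Real.tan θ ≤ Real.tan (Real.pi/13) :=
    hmono (hmem θ h1 h2) (hmem _ (by linarith) le_rfl) h2
  have hlb : Real.tan (-(Real.pi/13)) ≤ Real.tan θ :=
    hmono (hmem _ le_rfl (by linarith)) (hmem θ h1 h2) h1
  rw [Real.tan_neg] at hlb
  have := tan_pi_div_13_le
  rw [abs_le]; constructor <;> linarith

/-- for any `M > 0` there is `r > 0` such that whenever `0 < |α| < r`,
`|arg α| < π/4`, and `θ ∈ [-π/13, π/13]`, one has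
`Re(1/(4α)) < Re(1/α) - M - tan θ · Im(1/α) < Re(5/(4α))`. -/
theorem petal_width_estimate (M : ℝ) (hM : 0 < M) :
    ∃ r > 0, ∀ α : ℂ, α ≠ 0 → ‖α‖ < r → ‖α‖ < 1 →
      |Complex.arg α| < Real.pi / 4 →
      ∀ θ : ℝ, θ ∈ Set.Icc (-(Real.pi / 13)) (Real.pi / 13) →
        (1 / (4 * α)).re < (1 / α).re - M - Real.tan θ * (1 / α).im ∧
        (1 / α).re - M - Real.tan θ * (1 / α).im < (5 / (4 * α)).re := by
  refine ⟨1 / (8 * M), by positivity, ?_⟩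
  intro α hα hr h1 harg θ hθ
  set β : ℂ := 1 / α with hβ
  have hβ0 : β ≠ 0 := by simp [hβ, hα]
  have hαpos : 0 < ‖α‖ := by simpa using hα
  have habs0 : ‖β‖ ≠ 0 := by
    simpa using hβ0
  have habsβ : ‖β‖ = (‖α‖)⁻¹ := by
    simp [hβ, map_inv₀]
  have habsβ_lt : 8 * M < ‖β‖ := by
    rw [habsβ, ← one_div, lt_div_iff₀ hαpos]
    nlinarith [(lt_div_iff₀ (by positivity : (0:ℝ) < 8*M)).mp hr]
  have hargα_ne : Complex.arg α ≠ Real.pi := by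
    intro h
    rw [h, abs_of_pos Real.pi_pos] at harg
    have := Real.pi_pos; linarith
  have hargβ : Complex.arg β = -Complex.arg α := by
    rw [hβ, one_div, Complex.arg_inv, if_neg hargα_ne]
  have hargβ_lt : |Complex.arg β| < Real.pi / 4 := by
    rw [hargβ, abs_neg]; exact harg
  have hre : β.re = ‖β‖ * Real.cos (Complex.arg β) := by
    rw [Complex.cos_arg hβ0]; field_simp
  have him : β.im = ‖β‖ * Real.sin (Complex.arg β) := by
    rw [Complex.sin_arg]; field_simp
  have hcos_ge : Real.cos (Real.pi/4) ≤ Real.cos (Complex.arg β) := by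
    conv_rhs => rw [← Real.cos_abs]
    apply Real.cos_le_cos_of_nonneg_of_le_pi (abs_nonneg _) ?_ hargβ_lt.le
    have := Real.pi_pos; linarith
  have hsqrt2 : (1:ℝ) < Real.sqrt 2 := by
    nlinarith [Real.sq_sqrt (by norm_num : (0:ℝ) ≤ 2), Real.sqrt_nonneg 2]
  have hc2 : Real.sqrt 2 / 2 ≤ Real.cos (Complex.arg β) := by
    rw [← Real.cos_pi_div_four]; exact hcos_ge
  have hcos_half : (1:ℝ)/2 < Real.cos (Complex.arg β) := by linarith
  have hrepos : 4 * M < β.re := by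
    rw [hre]
    calc 4 * M = (8 * M) * (1/2) := by ring
    _ < ‖β‖ * Real.cos (Complex.arg β) := by
        apply mul_lt_mul' habsβ_lt.le hcos_half (by norm_num); linarith
  have hsin : |Real.sin (Complex.arg β)| ≤ Real.cos (Complex.arg β) := by
    have hsq : Real.sin (Complex.arg β) ^ 2 ≤ Real.cos (Complex.arg β) ^ 2 := by
      nlinarith [Real.sin_sq_add_cos_sq (Complex.arg β),
        Real.sq_sqrt (by norm_num : (0:ℝ) ≤ 2), Real.sqrt_nonneg 2]
    nlinarith [sq_abs (Real.sin (Complex.arg β)), abs_nonneg (Real.sin (Complex.arg β))]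
  have himle : |β.im| ≤ β.re := by
    rw [hre, him, abs_mul,
      abs_of_nonneg (norm_nonneg β)]
    exact mul_le_mul_of_nonneg_left hsin (norm_nonneg β)
  have htan : |Real.tan θ| ≤ 1/4 := abs_tan_le hθ
  have hprod : |Real.tan θ * β.im| ≤ (1/4) * β.re := by
    rw [abs_mul]
    apply mul_le_mul htan himle (abs_nonneg _) (by norm_num)
  rw [abs_le] at hprod
  have e1 : (1 / (4 * α)).re = (1/4) * β.re := by
    have h : (1 / (4 * α) : ℂ) = ((1/4 : ℝ) : ℂ) * β := by
      rw [hβ]; push_cast; field_simp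
    rw [h, Complex.re_ofReal_mul]
  have e2 : (5 / (4 * α)).re = (5/4) * β.re := by
    have h : (5 / (4 * α) : ℂ) = ((5/4 : ℝ) : ℂ) * β := by
      rw [hβ]; push_cast; field_simp
    rw [h, Complex.re_ofReal_mul]
  rw [e1, e2]
  constructor <;> [linarith; linarith]
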